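/- For Lebesgue-almost every α ∈ ℝ, the series Σ_{k=1}^{∞} 1/(k³ · ‖kα‖²) converges, where ‖t‖ denotes the distance from the real number t to the nearest integer. -/

import Mathlib

open MeasureTheory Filter

/-- Distance from a real number to the nearest integer. -/
noncomputable def distToInt (t : ℝ) : ℝ := |t - round t|

namespace DistToIntAux

open Set
open scoped ENNReal

lemma measurable_distToInt : Measurable distToInt := by
  have : distToInt = fun t => min (Int.fract t) (1 - Int.fract t) := by
    funext t; exact abs_sub_round_eq_min t
  rw [this]; exact measurable_fract.min (measurable_const.sub measurable_fract)

lemma distToInt_add_int (t : ℝ) (n : ℤ) : distToInt (t + n) = distToInt t := by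
  unfold distToInt; rw [round_add_intCast]; push_cast; ring_nf

lemma rpow_eq (c d : ℝ) (hc : 0 < c) (hd : 0 ≤ d) :
    (1 / (c^3 * d^2)) ^ ((2:ℝ)/5) = c ^ (-(6/5):ℝ) * d ^ (-(4/5):ℝ) := by
  rcases eq_or_lt_of_le hd with h|h
  · rw [← h]
    norm_num
  · rw [one_div, ← Real.rpow_neg_one, ← Real.rpow_mul (by positivity),
      Real.mul_rpow (by positivity) (by positivity), ← Real.rpow_natCast c 3,
      ← Real.rpow_natCast d 2, ← Real.rpow_mul hc.le, ← Real.rpow_mul h.le]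
    push_cast
    norm_num

noncomputable def h' : ℝ → ℝ≥0∞ := fun t => ENNReal.ofReal (distToInt t ^ (-(4/5):ℝ))

lemma measurable_h' : Measurable h' :=
  (measurable_distToInt.pow measurable_const).ennreal_ofReal

lemma step_trans (n : ℤ) : ∫⁻ t in Ioc ((n:ℝ)) ((n:ℝ)+1), h' t = ∫⁻ t in Ioc (0:ℝ) 1, h' t := by
  have hmp : MeasurePreserving (· + (n:ℝ)) volume volume :=
    measurePreserving_add_right volume (n:ℝ)
  have hemb : MeasurableEmbedding (· + (n:ℝ)) := measurableEmbedding_addRight _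
  have key := hmp.setLIntegral_comp_emb hemb h' (Ioc 0 1)
  have himg : (· + (n:ℝ)) '' Ioc 0 1 = Ioc ((n:ℝ)) ((n:ℝ)+1) := by
    rw [image_add_const_Ioc]; ring_nf
  rw [himg] at key
  rw [← key]
  apply setLIntegral_congr_fun measurableSet_Ioc
  intro t _
  simp [h', distToInt_add_int]

lemma step_sum (m : ℕ) : ∫⁻ t in Ioc (0:ℝ) (m:ℝ), h' t = m * ∫⁻ t in Ioc (0:ℝ) 1, h' t := by
  induction m with
  | zero => simp
  | succ m ih =>
    have hsplit : Ioc (0:ℝ) ((m+1:ℕ):ℝ) = Ioc (0:ℝ) (m:ℝ) ∪ Ioc ((m:ℝ)) ((m:ℝ)+1) := by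
      push_cast
      rw [Ioc_union_Ioc_eq_Ioc (by positivity) (by linarith)]
    rw [hsplit, lintegral_union measurableSet_Ioc (Set.Ioc_disjoint_Ioc_of_le le_rfl), ih]
    have ht := step_trans (m:ℤ)
    push_cast at ht
    rw [ht]
    push_cast
    ring

lemma step_scale (m : ℕ) (hm : 0 < m) :
    ∫⁻ α in Ioc (0:ℝ) 1, h' ((m:ℝ)*α) = ∫⁻ t in Ioc (0:ℝ) 1, h' t := by
  have hc : (0:ℝ) < (m:ℝ) := by exact_mod_cast hm
  have hc' : (m:ℝ) ≠ 0 := hc.ne'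
  have hmap : Measure.map (((m:ℝ)) * ·) volume = ENNReal.ofReal ((m:ℝ))⁻¹ • volume := by
    rw [Real.map_volume_mul_left hc', abs_inv, abs_of_pos hc]
  have hmp : MeasurePreserving (((m:ℝ)) * ·) volume (ENNReal.ofReal ((m:ℝ))⁻¹ • volume) :=
    ⟨measurable_const_mul _, hmap⟩
  have hemb : MeasurableEmbedding (((m:ℝ)) * ·) := by
    have := measurableEmbedding_const_smul₀ (G₀ := ℝ) (α := ℝ) (c := (m:ℝ)) hc'
    simpa [smul_eq_mul] using this
  have key := hmp.setLIntegral_comp_preimage_emb hemb h' (Ioc 0 (m:ℝ))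
  have hpre : (((m:ℝ)) * ·) ⁻¹' Ioc 0 (m:ℝ) = Ioc (0:ℝ) 1 := by
    ext x
    simp only [mem_preimage, mem_Ioc]
    constructor
    · rintro ⟨h1, h2⟩
      refine ⟨by nlinarith, by nlinarith⟩
    · rintro ⟨h1, h2⟩
      refine ⟨by nlinarith, by nlinarith⟩
  rw [hpre] at key
  rw [key, Measure.restrict_smul, lintegral_smul_measure, step_sum]
  rw [smul_eq_mul, ← mul_assoc, ← ENNReal.ofReal_natCast, ← ENNReal.ofReal_mul (by positivity),
    inv_mul_cancel₀ hc']
  simp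

lemma hC_fin : ∫⁻ t in Ioc (0:ℝ) 1, h' t < ⊤ := by
  have hb : ∀ t ∈ Ioc (0:ℝ) 1,
      h' t ≤ ENNReal.ofReal (t ^ (-(4/5):ℝ)) + ENNReal.ofReal ((1-t) ^ (-(4/5):ℝ)) := by
    rintro t ⟨ht0, ht1⟩
    rcases eq_or_lt_of_le ht1 with h1|h1
    · have : distToInt t = 0 := by
        rw [h1]; simp [distToInt]
      simp [h', this, Real.zero_rpow (by norm_num : (-(4/5):ℝ) ≠ 0)]
    · have hd : distToInt t = min t (1 - t) := by
        rw [distToInt, abs_sub_round_eq_min, Int.fract_eq_self.mpr ⟨ht0.le, h1⟩]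
      rcases min_cases t (1-t) with ⟨he, _⟩|⟨he, _⟩
      · rw [h', hd, he]
        exact le_add_of_nonneg_right zero_le |>.trans_eq rfl |>.trans (le_refl _)
      · rw [h', hd, he]
        exact le_add_of_nonneg_left zero_le
  have hmono := setLIntegral_mono (μ := volume) (s := Ioc (0:ℝ) 1)
    (((measurable_id.pow measurable_const).ennreal_ofReal).add
      ((measurable_const.sub measurable_id).pow measurable_const).ennreal_ofReal) hb
  refine lt_of_le_of_lt hmono ?_
  have hA : ∫⁻ t in Ioc (0:ℝ) 1, ENNReal.ofReal (t ^ (-(4/5):ℝ)) < ⊤ := by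
    have hi : IntervalIntegrable (fun x : ℝ => x ^ (-(4/5):ℝ)) volume 0 1 :=
      intervalIntegral.intervalIntegrable_rpow' (by norm_num)
    have hio : IntegrableOn (fun x : ℝ => x ^ (-(4/5):ℝ)) (Ioc 0 1) volume := by
      rwa [intervalIntegrable_iff_integrableOn_Ioc_of_le (by norm_num)] at hi
    have := hio.2
    rwa [hasFiniteIntegral_iff_ofReal ?_] at this
    filter_upwards [ae_restrict_mem measurableSet_Ioc] with t ht
    exact Real.rpow_nonneg ht.1.le _
  have hB : ∫⁻ t in Ioc (0:ℝ) 1, ENNReal.ofReal ((1-t) ^ (-(4/5):ℝ)) < ⊤ := by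
    have hi : IntervalIntegrable (fun x : ℝ => x ^ (-(4/5):ℝ)) volume 0 1 :=
      intervalIntegral.intervalIntegrable_rpow' (by norm_num)
    have hi2 : IntervalIntegrable (fun x : ℝ => (1-x) ^ (-(4/5):ℝ)) volume 0 1 := by
      have := hi.comp_sub_left 1
      norm_num at this
      exact this.symm
    have hio : IntegrableOn (fun x : ℝ => (1-x) ^ (-(4/5):ℝ)) (Ioc 0 1) volume := by
      rwa [intervalIntegrable_iff_integrableOn_Ioc_of_le (by norm_num)] at hi2
    have := hio.2
    rwa [hasFiniteIntegral_iff_ofReal ?_] at this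
    filter_upwards [ae_restrict_mem measurableSet_Ioc] with t ht
    exact Real.rpow_nonneg (by linarith [ht.2] : (0:ℝ) ≤ 1 - t) _
  calc ∫⁻ t in Ioc (0:ℝ) 1, (ENNReal.ofReal (t ^ (-(4/5):ℝ)) + ENNReal.ofReal ((1-t) ^ (-(4/5):ℝ)))
      = (∫⁻ t in Ioc (0:ℝ) 1, ENNReal.ofReal (t ^ (-(4/5):ℝ)))
        + ∫⁻ t in Ioc (0:ℝ) 1, ENNReal.ofReal ((1-t) ^ (-(4/5):ℝ)) :=
        lintegral_add_left ((measurable_id.pow measurable_const).ennreal_ofReal) _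
    _ < ⊤ := ENNReal.add_lt_top.mpr ⟨hA, hB⟩

noncomputable def G (k : ℕ) (α : ℝ) : ℝ≥0∞ :=
  ENNReal.ofReal (((k:ℝ)+1) ^ (-(6/5):ℝ)) * h' (((k:ℝ)+1)*α)

lemma measurable_G (k : ℕ) : Measurable (G k) :=
  measurable_const.mul (measurable_h'.comp (measurable_id.const_mul _))

lemma summable_aux : Summable (fun k : ℕ => ((k:ℝ)+1) ^ (-(6/5):ℝ)) := by
  have h1 : Summable (fun n : ℕ => (n:ℝ) ^ (-(6/5):ℝ)) :=
    (Real.summable_nat_rpow (p := (-(6/5):ℝ))).mpr (by norm_num)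
  have h2 := (summable_nat_add_iff 1).mpr h1
  refine h2.congr fun n => ?_
  push_cast
  ring_nf

lemma hfin : ∫⁻ α in Ioc (0:ℝ) 1, ∑' k, G k α < ⊤ := by
  rw [lintegral_tsum (fun k => (measurable_G k).aemeasurable)]
  have heq : ∀ k : ℕ, ∫⁻ α in Ioc (0:ℝ) 1, G k α
      = ENNReal.ofReal (((k:ℝ)+1) ^ (-(6/5):ℝ)) * ∫⁻ t in Ioc (0:ℝ) 1, h' t := by
    intro k
    simp only [G]
    rw [lintegral_const_mul _ (show Measurable fun α : ℝ => h' (((k:ℝ)+1)*α) from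
      measurable_h'.comp (measurable_id.const_mul _))]
    congr 1
    have := step_scale (k+1) k.succ_pos
    push_cast at this
    exact this
  rw [tsum_congr heq, ENNReal.tsum_mul_right,
    ← ENNReal.ofReal_tsum_of_nonneg (fun k => Real.rpow_nonneg (by positivity) _) summable_aux]
  exact ENNReal.mul_lt_top ENNReal.ofReal_lt_top hC_fin

set_option maxHeartbeats 1000000 in
lemma pointwise (α : ℝ) (hα : ∑' k, G k α ≠ ⊤) :
    Summable (fun k : ℕ => 1 / (((k:ℝ)+1)^3 * distToInt (((k:ℝ)+1)*α)^2)) := by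
  set f : ℕ → ℝ := fun k => 1 / (((k:ℝ)+1)^3 * distToInt (((k:ℝ)+1)*α)^2) with hf
  have h0 : ∀ k, 0 ≤ f k := by
    intro k
    apply one_div_nonneg.mpr
    positivity
  have h2 : ∀ k, (G k α).toReal = f k ^ ((2:ℝ)/5) := by
    intro k
    have hc : (0:ℝ) < (k:ℝ)+1 := by positivity
    have hd : (0:ℝ) ≤ distToInt (((k:ℝ)+1)*α) := abs_nonneg _
    simp only [G]
    rw [hf, rpow_eq _ _ hc hd, h', ENNReal.toReal_mul,
      ENNReal.toReal_ofReal (Real.rpow_nonneg hc.le _),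
      ENNReal.toReal_ofReal (Real.rpow_nonneg hd _)]
  have hs : Summable (fun k => f k ^ ((2:ℝ)/5)) := by
    have := ENNReal.summable_toReal hα
    exact this.congr h2
  have hten : Tendsto (fun k => f k ^ ((2:ℝ)/5)) atTop (nhds 0) := hs.tendsto_atTop_zero
  have hev : ∀ᶠ k in atTop, f k ≤ f k ^ ((2:ℝ)/5) := by
    filter_upwards [hten.eventually_lt_const one_pos] with k hk
    rcases eq_or_lt_of_le (h0 k) with h|h
    · rw [← h]
      exact Real.rpow_nonneg le_rfl _
    · have hle1 : f k ≤ 1 := by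
        by_contra hgt
        push_neg at hgt
        have : 1 < f k ^ ((2:ℝ)/5) := by
          rw [Real.one_lt_rpow_iff_of_pos h]
          exact Or.inl ⟨hgt, by norm_num⟩
        linarith
      calc f k = f k ^ (1:ℝ) := (Real.rpow_one _).symm
        _ ≤ f k ^ ((2:ℝ)/5) := Real.rpow_le_rpow_of_exponent_ge h hle1 (by norm_num)
  obtain ⟨N, hN⟩ := eventually_atTop.mp hev
  refine (summable_nat_add_iff N).mp ?_
  exact Summable.of_nonneg_of_le (fun k => h0 _) (fun k => hN (k+N) (Nat.le_add_left _ _))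
    ((summable_nat_add_iff N).mpr hs)

lemma main01 : ∀ᵐ α ∂(volume.restrict (Ioc (0:ℝ) 1)),
    Summable (fun k : ℕ => 1 / (((k:ℝ)+1)^3 * distToInt (((k:ℝ)+1)*α)^2)) := by
  have hae := ae_lt_top (Measurable.ennreal_tsum measurable_G) hfin.ne
  filter_upwards [hae] with α hα
  exact pointwise α hα.ne

end DistToIntAux

open Set DistToIntAux in
/-- For Lebesgue-almost every `α ∈ ℝ`, the series `Σ_{k ≥ 1} 1/(k³ · ‖kα‖²)` converges,
where `‖t‖` denotes the distance from `t` to the nearest integer. -/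
theorem stmt2 :
    ∀ᵐ α ∂(volume : Measure ℝ),
      Summable (fun k : ℕ =>
        1 / (((k : ℝ) + 1) ^ 3 * distToInt (((k : ℝ) + 1) * α) ^ 2)) := by
  set P : ℝ → Prop := fun α =>
    Summable (fun k : ℕ => 1 / (((k:ℝ)+1)^3 * distToInt (((k:ℝ)+1)*α)^2)) with hP
  have hshift : ∀ (α : ℝ) (n : ℤ), P (α + n) ↔ P α := by
    intro α n
    have hfun : (fun k : ℕ => 1 / (((k:ℝ)+1)^3 * distToInt (((k:ℝ)+1)*(α+(n:ℝ)))^2))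
        = fun k : ℕ => 1 / (((k:ℝ)+1)^3 * distToInt (((k:ℝ)+1)*α)^2) := by
      funext k
      have hc : ((k:ℝ)+1)*(α+(n:ℝ)) = ((k:ℝ)+1)*α + ((((k:ℤ)+1)*n : ℤ) : ℝ) := by
        push_cast; ring
      rw [hc, distToInt_add_int]
    simp only [hP]
    rw [hfun]
  rw [ae_iff]
  set S := {α | ¬ P α} with hS
  have hSshift : ∀ (α : ℝ) (n : ℤ), α ∈ S ↔ α + (n:ℝ) ∈ S := by
    intro α n
    simp only [hS, mem_setOf_eq, hshift α n]
  have h01 : volume (S ∩ Ioc 0 1) = 0 := by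
    have h := main01
    rw [ae_iff] at h
    exact le_antisymm (le_trans (Measure.le_restrict_apply _ _) h.le) zero_le
  have hn : ∀ n : ℤ, volume (S ∩ Ioc (n:ℝ) ((n:ℝ)+1)) = 0 := by
    intro n
    have himg : S ∩ Ioc (n:ℝ) ((n:ℝ)+1) = (· + (n:ℝ)) '' (S ∩ Ioc 0 1) := by
      ext x
      simp only [mem_image, mem_inter_iff, mem_Ioc]
      constructor
      · rintro ⟨hxS, hx1, hx2⟩
        refine ⟨x - (n:ℝ), ⟨?_, by linarith, by linarith⟩, by ring⟩
        apply (hSshift (x - (n:ℝ)) n).mpr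
        simpa using hxS
      · rintro ⟨y, ⟨hyS, hy1, hy2⟩, rfl⟩
        exact ⟨(hSshift y n).mp hyS, by linarith, by linarith⟩
    rw [himg]
    have : (· + (n:ℝ)) '' (S ∩ Ioc 0 1) = (· + (-(n:ℝ))) ⁻¹' (S ∩ Ioc 0 1) := by
      ext x
      simp only [mem_image, mem_preimage]
      constructor
      · rintro ⟨y, hy, rfl⟩
        simpa using hy
      · intro hx
        exact ⟨x + (-(n:ℝ)), hx, by ring⟩
    rw [this, measure_preimage_add_right]
    exact h01
  have hcover : S ⊆ ⋃ n : ℤ, S ∩ Ioc (n:ℝ) ((n:ℝ)+1) := by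
    intro x hx
    refine mem_iUnion.mpr ⟨⌈x⌉ - 1, hx, ?_, ?_⟩
    · push_cast; linarith [Int.ceil_lt_add_one x]
    · push_cast; linarith [Int.le_ceil x]
  exact le_antisymm ((measure_mono hcover).trans (measure_iUnion_null hn).le) zero_le
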